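/- Let p be a prime, let R be a commutative ring of characteristic p, let m > 0, and let ∂ = (∂_n)_{0 ≤ n < p^m} be an m-truncated HS-derivation on R. Then for every i < m, every j ∈ ℕ, and all x, y ∈ R: ∂_{p^i}^{(j)}(x·y^{p^i}) = Σ_{l=0}^{j} binom(j, l)·∂_{p^i}^{(j−l)}(x)·(∂_1^{(l)}(y))^{p^i}. -/

import Mathlib

open Finset Function Polynomial

def IsTruncHSDeriv (p m : ℕ) {R : Type*} [CommRing R] (D : ℕ → R → R) : Prop :=
  (∀ n, n < p ^ m → ∀ x y, D n (x + y) = D n x + D n y) ∧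
  (∀ x, D 0 x = x) ∧
  (∀ n, n < p ^ m → ∀ x y, D n (x * y) = ∑ ij ∈ Finset.HasAntidiagonal.antidiagonal n, D ij.1 x * D ij.2 y)

private lemma iterate_binomial_aux {R : Type*} [CommRing R] (f : R →+ R) (F : ℕ → ℕ → R)
    (hF : ∀ a b, f (F a b) = F (a + 1) b + F a (b + 1)) (j : ℕ) :
    (⇑f)^[j] (F 0 0) = ∑ l ∈ range (j + 1), (j.choose l) • F (j - l) l := by
  induction j with
  | zero => simp
  | succ j ih =>
    rw [Function.iterate_succ_apply', ih, map_sum]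
    have h1 : ∀ l ∈ range (j + 1), f ((j.choose l) • F (j - l) l)
        = (j.choose l) • F (j - l + 1) l + (j.choose l) • F (j - l) (l + 1) := by
      intro l _
      rw [map_nsmul, hF, smul_add]
    rw [Finset.sum_congr rfl h1, Finset.sum_add_distrib]
    have hA : ∑ l ∈ range (j + 1), (j.choose l) • F (j - l + 1) l
        = (∑ l ∈ range j, (j.choose (l + 1)) • F (j - l) (l + 1)) + F (j + 1) 0 := by
      rw [Finset.sum_range_succ']
      congr 1
      · refine Finset.sum_congr rfl fun l hl => ?_
        have hl' : l < j := Finset.mem_range.mp hl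
        congr 2
        omega
      · simp
    have hB : ∑ l ∈ range (j + 1), (j.choose l) • F (j - l) (l + 1)
        = (∑ l ∈ range j, (j.choose l) • F (j - l) (l + 1)) + F 0 (j + 1) := by
      rw [Finset.sum_range_succ]
      simp
    rw [hA, hB]
    have hT : ∑ l ∈ range (j + 1 + 1), ((j + 1).choose l) • F (j + 1 - l) l
        = (∑ l ∈ range j, ((j + 1).choose (l + 1)) • F (j - l) (l + 1))
          + F 0 (j + 1) + F (j + 1) 0 := by
      rw [Finset.sum_range_succ']
      congr 1
      swap
      · simp
      have : ∀ l ∈ range (j + 1), ((j + 1).choose (l + 1)) • F (j + 1 - (l + 1)) (l + 1)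
          = ((j + 1).choose (l + 1)) • F (j - l) (l + 1) := by
        intro l hl
        congr 2
        omega
      rw [Finset.sum_congr rfl this, Finset.sum_range_succ, Nat.choose_self, one_smul]
      simp
    rw [hT]
    have : ∀ l ∈ range j, ((j + 1).choose (l + 1)) • F (j - l) (l + 1)
        = (j.choose l) • F (j - l) (l + 1) + (j.choose (l + 1)) • F (j - l) (l + 1) := by
      intro l _
      rw [Nat.choose_succ_succ, add_smul]
    rw [Finset.sum_congr rfl this, Finset.sum_add_distrib]
    abel

theorem iterate_leibniz_p_pow (p : ℕ) (hp : p.Prime) (m : ℕ) (hm : 0 < m)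
    (R : Type*) [CommRing R] [CharP R p]
    (D : ℕ → R → R)
    (hD : IsTruncHSDeriv p m D)
    (i : ℕ) (hi : i < m) (j : ℕ) (x y : R) :
    (D (p ^ i))^[j] (x * y ^ p ^ i) =
      ∑ l ∈ Finset.range (j + 1),
        j.choose l • ((D (p ^ i))^[j - l] x * ((D 1)^[l] y) ^ p ^ i) := by
  obtain ⟨hadd, hzero, hmul⟩ := hD
  haveI : ExpChar R p := ExpChar.prime hp
  have hpi : p ^ i < p ^ m := Nat.pow_lt_pow_right hp.one_lt hi
  have hpk : 0 < p ^ i := pow_pos hp.pos i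
  have h1m : 1 < p ^ m := by
    calc 1 < p := hp.one_lt
    _ = p ^ 1 := (pow_one p).symm
    _ ≤ p ^ m := Nat.pow_le_pow_right hp.pos hm
  set E : R → R[X] := fun x => ∑ n ∈ range (p ^ m), Polynomial.C (D n x) * X ^ n with hE
  have hcoeff : ∀ x n, (E x).coeff n = if n < p ^ m then D n x else 0 := by
    intro x n
    rw [hE]
    simp only [Polynomial.finset_sum_coeff, Polynomial.coeff_C_mul, Polynomial.coeff_X_pow,
      mul_ite, mul_one, mul_zero]
    rw [Finset.sum_ite_eq (range (p ^ m)) n (fun k => D k x)]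
    simp [Finset.mem_range]
  have hmulcoeff : ∀ (f g : R[X]) (u v : R), (∀ n, n < p ^ m → f.coeff n = D n u) →
      (∀ n, n < p ^ m → g.coeff n = D n v) →
      ∀ n, n < p ^ m → (f * g).coeff n = D n (u * v) := by
    intro f g u v hf hg n hn
    rw [Polynomial.coeff_mul, hmul n hn]
    refine Finset.sum_congr rfl fun ij hij => ?_
    have hij' : ij.1 + ij.2 = n := Finset.HasAntidiagonal.mem_antidiagonal.mp hij
    rw [hf ij.1 (by omega), hg ij.2 (by omega)]
  have hpow : ∀ (k : ℕ) (v : R), ∀ n, n < p ^ m → ((E v) ^ (k + 1)).coeff n = D n (v ^ (k + 1)) := by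
    intro k
    induction k with
    | zero => intro v n hn; simp [hcoeff, hn]
    | succ k ihk =>
      intro v n hn
      rw [pow_succ (E v), pow_succ v]
      exact hmulcoeff _ _ _ _ (fun n hn => ihk v n hn)
        (fun n hn => by rw [hcoeff, if_pos hn]) n hn
  have key : ∀ (v : R) (b : ℕ), b ≤ p ^ i →
      D b (v ^ p ^ i) = if b = 0 then v ^ p ^ i
        else if b = p ^ i then (D 1 v) ^ p ^ i else 0 := by
    intro v b hb
    have hb' : b < p ^ m := lt_of_le_of_lt hb hpi
    have e1 : D b (v ^ p ^ i) = ((E v) ^ p ^ i).coeff b := by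
      have h2 := hpow (p ^ i - 1) v b hb'
      rw [(by omega : p ^ i - 1 + 1 = p ^ i)] at h2
      exact h2.symm
    rw [e1, ← map_iterateFrobenius_expand p (E v) i, Polynomial.coeff_map,
      Polynomial.coeff_expand hpk, coe_iterateFrobenius, apply_ite ((⇑(frobenius R p))^[i])]
    by_cases h0 : b = 0
    · subst h0
      rw [if_pos (dvd_zero _), if_pos rfl, Nat.zero_div, hcoeff, if_pos (by omega), hzero,
        iterate_frobenius]
    · by_cases hpb : b = p ^ i
      · subst hpb
        rw [if_pos dvd_rfl, if_neg h0, if_pos rfl, Nat.div_self hpk, hcoeff, if_pos h1m,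
          iterate_frobenius]
      · have : ¬ p ^ i ∣ b := by
          intro hd
          rcases hd with ⟨c, rfl⟩
          have hc : c ≤ 1 := Nat.le_of_mul_le_mul_left (by omega) hpk
          interval_cases c <;> simp_all
        rw [if_neg this, if_neg h0, if_neg hpb]
        simp
  have step : ∀ u v : R, D (p ^ i) (u * v ^ p ^ i)
      = D (p ^ i) u * v ^ p ^ i + u * (D 1 v) ^ p ^ i := by
    intro u v
    rw [hmul _ hpi, Finset.Nat.sum_antidiagonal_eq_sum_range_succ_mk]
    have hterm : ∀ k ∈ range (p ^ i + 1), D k u * D (p ^ i - k) (v ^ p ^ i)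
        = (if k = 0 then u * (D 1 v) ^ p ^ i else 0)
          + (if k = p ^ i then D (p ^ i) u * v ^ p ^ i else 0) := by
      intro k hk
      have hk' : k ≤ p ^ i := by
        have := Finset.mem_range.mp hk; omega
      rw [key v (p ^ i - k) (by omega)]
      by_cases h0 : k = 0
      · subst h0
        rw [Nat.sub_zero, if_neg hpk.ne', if_pos rfl, hzero, if_pos rfl,
          if_neg (by omega : ¬ (0 : ℕ) = p ^ i), add_zero]
      · by_cases hpb : k = p ^ i
        · subst hpb
          rw [Nat.sub_self, if_pos rfl, if_neg h0, if_pos rfl, zero_add]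
        · rw [if_neg (by omega : ¬ p ^ i - k = 0), if_neg (by omega : ¬ p ^ i - k = p ^ i),
            if_neg h0, if_neg hpb, mul_zero, add_zero]
    rw [Finset.sum_congr rfl hterm, Finset.sum_add_distrib,
      Finset.sum_ite_eq' (range (p ^ i + 1)) 0 (fun _ => u * (D 1 v) ^ p ^ i),
      Finset.sum_ite_eq' (range (p ^ i + 1)) (p ^ i) (fun _ => D (p ^ i) u * v ^ p ^ i),
      if_pos (Finset.mem_range.mpr (by omega)), if_pos (Finset.mem_range.mpr (by omega))]
    ring
  set f : R →+ R := AddMonoidHom.mk' (D (p ^ i)) (fun a b => hadd _ hpi a b) with hf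
  set F : ℕ → ℕ → R := fun a b => (D (p ^ i))^[a] x * ((D 1)^[b] y) ^ p ^ i with hF
  have hstep : ∀ a b, f (F a b) = F (a + 1) b + F a (b + 1) := by
    intro a b
    show D (p ^ i) ((D (p ^ i))^[a] x * ((D 1)^[b] y) ^ p ^ i) = _
    rw [step]
    rw [hF]
    simp only [Function.iterate_succ_apply']
  have := iterate_binomial_aux f F hstep j
  have hf' : ⇑f = D (p ^ i) := rfl
  rw [hf'] at this
  have hF00 : F 0 0 = x * y ^ p ^ i := by simp [hF]
  rw [hF00] at this
  exact this
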